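/- Let μ_D(w) = ∫_{[0,1]^d} k_{σ/√2}(u,w) dD(u) for a finite signed measure D on [0,1]^d. Then for finite signed measures D₁, D₂ on [0,1]^d, (1/σ)^d·(2/π)^{d/2} · ∫_{ℝ^d} μ_{D₁}(w)·μ_{D₂}(w) dw = ∫_{[0,1]^d} ∫_{[0,1]^d} k_σ(u,v) dD₁(u) dD₂(v). -/

import Mathlib

open MeasureTheory Real

/-- Integral of a real function against a finite signed measure, defined via the
Jordan decomposition. -/
noncomputable def signedIntegral {α : Type*} [MeasurableSpace α]
    (D : SignedMeasure α) (f : α → ℝ) : ℝ :=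
  (∫ x, f x ∂D.toJordanDecomposition.posPart) -
    ∫ x, f x ∂D.toJordanDecomposition.negPart

/-- The Gaussian kernel on `ℝ^d` with bandwidth `s`. -/
noncomputable def gaussKer (d : ℕ) (s : ℝ) (x y : Fin d → ℝ) : ℝ :=
  Real.exp (-(∑ i, (x i - y i) ^ 2) / (2 * s ^ 2))

/-- The unit cube `[0,1]^d`. -/
def unitCube (d : ℕ) : Set (Fin d → ℝ) := {x | ∀ i, x i ∈ Set.Icc (0:ℝ) 1}

open scoped ENNReal

-- 1D Gaussian convolution integral
lemma oneD (s a b : ℝ) (hs : 0 < s) :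
    ∫ x : ℝ, Real.exp (-((a - x) ^ 2 + (b - x) ^ 2) / (2 * s ^ 2)) =
      Real.sqrt (π * s ^ 2) * Real.exp (-(a - b) ^ 2 / (4 * s ^ 2)) := by
  have hs' : s ^ 2 ≠ 0 := by positivity
  have h1 : ∀ x : ℝ, Real.exp (-((a - x) ^ 2 + (b - x) ^ 2) / (2 * s ^ 2)) =
      Real.exp (-(a - b) ^ 2 / (4 * s ^ 2)) *
        Real.exp (-(1 / s ^ 2) * (x - (a + b) / 2) ^ 2) := by
    intro x
    rw [← Real.exp_add]
    congr 1
    field_simp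
    ring
  simp_rw [h1, integral_const_mul]
  rw [mul_comm (Real.sqrt _)]
  congr 1
  rw [integral_sub_right_eq_self (fun x : ℝ => Real.exp (-(1 / s ^ 2) * x ^ 2)) ((a + b) / 2)]
  rw [integral_gaussian]
  rw [div_div_eq_mul_div, div_one, mul_comm]

lemma gaussKer_nonneg (d : ℕ) (s : ℝ) (x y : Fin d → ℝ) : 0 ≤ gaussKer d s x y :=
  Real.exp_nonneg _

lemma gaussKer_le_one (d : ℕ) (s : ℝ) (x y : Fin d → ℝ) : gaussKer d s x y ≤ 1 := by
  rw [gaussKer, Real.exp_le_one_iff]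
  apply div_nonpos_of_nonpos_of_nonneg
  · simp only [neg_nonpos]
    positivity
  · positivity

lemma gaussKer_cont (d : ℕ) (s : ℝ) :
    Continuous fun p : (Fin d → ℝ) × (Fin d → ℝ) => gaussKer d s p.1 p.2 := by
  unfold gaussKer; fun_prop


lemma oneD_integrable (s a b : ℝ) (hs : 0 < s) :
    Integrable (fun x : ℝ => Real.exp (-((a - x) ^ 2 + (b - x) ^ 2) / (2 * s ^ 2))) := by
  have hs' : s ^ 2 ≠ 0 := by positivity
  have h1 : ∀ x : ℝ, Real.exp (-((a - x) ^ 2 + (b - x) ^ 2) / (2 * s ^ 2)) =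
      Real.exp (-(a - b) ^ 2 / (4 * s ^ 2)) *
        Real.exp (-(1 / s ^ 2) * (x - (a + b) / 2) ^ 2) := by
    intro x
    rw [← Real.exp_add]; congr 1; field_simp; ring
  simp_rw [h1]
  exact ((integrable_exp_neg_mul_sq (by positivity)).comp_sub_right ((a + b) / 2)).const_mul _

-- product form of the integrand
lemma prod_form (d : ℕ) (s : ℝ) (u v w : Fin d → ℝ) :
    gaussKer d s u w * gaussKer d s v w =
      ∏ i, Real.exp (-((u i - w i) ^ 2 + (v i - w i) ^ 2) / (2 * s ^ 2)) := by
  rw [gaussKer, gaussKer, ← Real.exp_add, ← Real.exp_sum]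
  congr 1
  rw [← add_div, ← neg_add, ← Finset.sum_add_distrib]
  rw [show (∑ i, -((u i - w i) ^ 2 + (v i - w i) ^ 2) / (2 * s ^ 2)) =
    (∑ i, -((u i - w i) ^ 2 + (v i - w i) ^ 2)) / (2 * s ^ 2) from (Finset.sum_div _ _ _).symm]
  rw [← Finset.sum_neg_distrib]

lemma prod_integrable (d : ℕ) (s : ℝ) (hs : 0 < s) (u v : Fin d → ℝ) :
    Integrable (fun w : Fin d → ℝ => gaussKer d s u w * gaussKer d s v w) := by
  simp_rw [prod_form]
  exact Integrable.fintype_prod (f := fun i x =>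
    Real.exp (-((u i - x) ^ 2 + (v i - x) ^ 2) / (2 * s ^ 2)))
    (fun i => oneD_integrable s (u i) (v i) hs)

lemma wInt (d : ℕ) (σ : ℝ) (hσ : 0 < σ) (u v : Fin d → ℝ) :
    ∫ w : Fin d → ℝ, gaussKer d (σ / Real.sqrt 2) u w * gaussKer d (σ / Real.sqrt 2) v w =
      (σ * Real.sqrt (π / 2)) ^ d * gaussKer d σ u v := by
  have h2 : (0:ℝ) < Real.sqrt 2 := Real.sqrt_pos.2 (by norm_num)
  have hs : 0 < σ / Real.sqrt 2 := div_pos hσ h2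
  have hs2 : (σ / Real.sqrt 2) ^ 2 = σ ^ 2 / 2 := by
    rw [div_pow, Real.sq_sqrt (by norm_num : (0:ℝ) ≤ 2)]
  simp_rw [prod_form]
  rw [integral_fintype_prod_volume_eq_prod (f := fun (i : Fin d) (x : ℝ) =>
    Real.exp (-((u i - x) ^ 2 + (v i - x) ^ 2) / (2 * (σ / Real.sqrt 2) ^ 2)))]
  have h1 : ∀ i, (∫ x : ℝ,
      Real.exp (-((u i - x) ^ 2 + (v i - x) ^ 2) / (2 * (σ / Real.sqrt 2) ^ 2))) =
      (σ * Real.sqrt (π / 2)) * Real.exp (-(u i - v i) ^ 2 / (2 * σ ^ 2)) := by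
    intro i
    rw [oneD _ _ _ hs, hs2]
    congr 2
    · rw [show π * (σ ^ 2 / 2) = π / 2 * σ ^ 2 by ring, Real.sqrt_mul (by positivity),
        Real.sqrt_sq hσ.le, mul_comm]
    · ring
  simp_rw [h1]
  rw [Finset.prod_mul_distrib, Finset.prod_const, ← Real.exp_sum, gaussKer]
  congr 2
  · simp [Finset.card_univ]
  · rw [← Finset.sum_neg_distrib, Finset.sum_div]

section core
variable {d : ℕ}

@[irreducible] noncomputable def Fk (d : ℕ) (s : ℝ) (x w : Fin d → ℝ) : ℝ≥0∞ :=
  ENNReal.ofReal (gaussKer d s x w)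

lemma Fk_apply (d : ℕ) (s : ℝ) (x w : Fin d → ℝ) :
    Fk d s x w = ENNReal.ofReal (gaussKer d s x w) := by rw [Fk]

lemma gaussKer_meas (d : ℕ) (s : ℝ) :
    Measurable fun p : (Fin d → ℝ) × (Fin d → ℝ) => gaussKer d s p.1 p.2 :=
  (gaussKer_cont d s).measurable

lemma Fk_meas (d : ℕ) (s : ℝ) :
    Measurable fun p : (Fin d → ℝ) × (Fin d → ℝ) => Fk d s p.1 p.2 := by
  simp only [Fk_apply]
  exact ENNReal.measurable_ofReal.comp (gaussKer_meas d s)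

lemma int_g (s : ℝ) (μ : Measure (Fin d → ℝ)) [IsFiniteMeasure μ] (w : Fin d → ℝ) :
    Integrable (fun u => gaussKer d s u w) μ := by
  refine (integrable_const (1:ℝ)).mono'
    (((gaussKer_meas d s).comp (measurable_id.prodMk measurable_const)).aestronglyMeasurable)
    (ae_of_all _ fun u => ?_)
  rw [Real.norm_eq_abs, abs_of_nonneg (gaussKer_nonneg _ _ _ _)]
  exact gaussKer_le_one _ _ _ _

lemma int_g' (s : ℝ) (ν : Measure (Fin d → ℝ)) [IsFiniteMeasure ν] (u : Fin d → ℝ) :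
    Integrable (fun v => gaussKer d s u v) ν := by
  refine (integrable_const (1:ℝ)).mono'
    (((gaussKer_meas d s).comp (measurable_const.prodMk measurable_id)).aestronglyMeasurable)
    (ae_of_all _ fun v => ?_)
  rw [Real.norm_eq_abs, abs_of_nonneg (gaussKer_nonneg _ _ _ _)]
  exact gaussKer_le_one _ _ _ _

lemma meas_A (s : ℝ) (μ : Measure (Fin d → ℝ)) [IsFiniteMeasure μ] :
    StronglyMeasurable fun w : Fin d → ℝ => ∫ u, gaussKer d s u w ∂μ := by
  apply MeasureTheory.StronglyMeasurable.integral_prod_right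
    (f := fun (w u : Fin d → ℝ) => gaussKer d s u w)
  exact ((gaussKer_cont d s).comp (continuous_snd.prodMk continuous_fst)).stronglyMeasurable

lemma ofReal_A (s : ℝ) (μ : Measure (Fin d → ℝ)) [IsFiniteMeasure μ] (w : Fin d → ℝ) :
    ENNReal.ofReal (∫ u, gaussKer d s u w ∂μ) = ∫⁻ u, Fk d s u w ∂μ := by
  simp only [Fk_apply]
  exact ofReal_integral_eq_lintegral_ofReal (int_g s μ w)
    (ae_of_all _ fun u => gaussKer_nonneg _ _ _ _)

lemma L_swap' {d : ℕ} (F : (Fin d → ℝ) → (Fin d → ℝ) → ℝ≥0∞)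
    (mF : Measurable fun p : (Fin d → ℝ) × (Fin d → ℝ) => F p.1 p.2)
    (μ ν : Measure (Fin d → ℝ)) [IsFiniteMeasure μ] [IsFiniteMeasure ν] :
    ∫⁻ w : Fin d → ℝ, (∫⁻ u, F u w ∂μ) * (∫⁻ v, F v w ∂ν) =
      ∫⁻ u, ∫⁻ v, ∫⁻ w : Fin d → ℝ, F u w * F v w ∂volume ∂ν ∂μ := by
  have h1 : (∫⁻ w : Fin d → ℝ, (∫⁻ u, F u w ∂μ) * (∫⁻ v, F v w ∂ν)) =
      ∫⁻ w : Fin d → ℝ, ∫⁻ u, ∫⁻ v, F u w * F v w ∂ν ∂μ := by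
    refine lintegral_congr fun w => ?_
    rw [← lintegral_mul_const'' (∫⁻ v, F v w ∂ν) (f := fun u => F u w)
      ((mF.comp (measurable_id.prodMk measurable_const)).aemeasurable)]
    refine lintegral_congr fun u => ?_
    exact (lintegral_const_mul'' (F u w) (f := fun v => F v w)
      ((mF.comp (measurable_id.prodMk measurable_const)).aemeasurable)).symm
  rw [h1]
  have m1 : Measurable (Function.uncurry fun (w u : Fin d → ℝ) =>
      ∫⁻ v, F u w * F v w ∂ν) := by
    have hq : Measurable fun q : ((Fin d → ℝ) × (Fin d → ℝ)) × (Fin d → ℝ) =>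
        F q.1.2 q.1.1 * F q.2 q.1.1 :=
      (mF.comp ((measurable_fst.snd).prodMk measurable_fst.fst)).mul
        (mF.comp (measurable_snd.prodMk measurable_fst.fst))
    exact hq.lintegral_prod_right'
  have h2 : (∫⁻ w : Fin d → ℝ, ∫⁻ u, (∫⁻ v, F u w * F v w ∂ν) ∂μ ∂volume)
      = ∫⁻ u, ∫⁻ w : Fin d → ℝ, (∫⁻ v, F u w * F v w ∂ν) ∂volume ∂μ :=
    lintegral_lintegral_swap m1.aemeasurable
  rw [h2]
  refine lintegral_congr fun u => ?_
  have m2 : Measurable (Function.uncurry fun (w v : Fin d → ℝ) => F u w * F v w) :=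
    (mF.comp (measurable_const.prodMk measurable_fst)).mul
      (mF.comp (measurable_snd.prodMk measurable_fst))
  exact lintegral_lintegral_swap m2.aemeasurable

lemma inner_val (σ : ℝ) (hσ : 0 < σ) (u v : Fin d → ℝ) :
    (∫⁻ w : Fin d → ℝ, Fk d (σ / Real.sqrt 2) u w * Fk d (σ / Real.sqrt 2) v w) =
      ENNReal.ofReal ((σ * Real.sqrt (π / 2)) ^ d) * Fk d σ u v := by
  rw [Fk_apply]
  have hs : 0 < σ / Real.sqrt 2 := div_pos hσ (Real.sqrt_pos.2 (by norm_num))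
  have h : ∀ w, Fk d (σ / Real.sqrt 2) u w * Fk d (σ / Real.sqrt 2) v w =
      ENNReal.ofReal (gaussKer d (σ / Real.sqrt 2) u w * gaussKer d (σ / Real.sqrt 2) v w) := by
    intro w; rw [Fk, Fk, ENNReal.ofReal_mul (gaussKer_nonneg _ _ _ _)]
  simp_rw [h]
  rw [← ofReal_integral_eq_lintegral_ofReal (prod_integrable d _ hs u v)
    (ae_of_all _ fun w => mul_nonneg (gaussKer_nonneg _ _ _ _) (gaussKer_nonneg _ _ _ _))]
  rw [wInt d σ hσ u v, ENNReal.ofReal_mul (by positivity)]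

lemma M_fin (σ : ℝ) (μ ν : Measure (Fin d → ℝ)) [IsFiniteMeasure μ] [IsFiniteMeasure ν] :
    (∫⁻ u, ∫⁻ v, Fk d σ u v ∂ν ∂μ) ≠ ⊤ := by
  have h1 : (∫⁻ u, ∫⁻ v, Fk d σ u v ∂ν ∂μ) ≤ ∫⁻ _u, ν Set.univ ∂μ := by
    refine lintegral_mono fun u => ?_
    calc (∫⁻ v, Fk d σ u v ∂ν) ≤ ∫⁻ _v, 1 ∂ν :=
          lintegral_mono fun v => by
            rw [Fk_apply]; exact ENNReal.ofReal_le_one.2 (gaussKer_le_one _ _ _ _)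
      _ = ν Set.univ := by rw [lintegral_one]
  rw [lintegral_const] at h1
  exact (h1.trans_lt (ENNReal.mul_lt_top (measure_lt_top _ _) (measure_lt_top _ _))).ne

lemma L_val (σ : ℝ) (hσ : 0 < σ) (μ ν : Measure (Fin d → ℝ))
    [IsFiniteMeasure μ] [IsFiniteMeasure ν] :
    ∫⁻ w : Fin d → ℝ, (∫⁻ u, Fk d (σ / Real.sqrt 2) u w ∂μ) *
        (∫⁻ v, Fk d (σ / Real.sqrt 2) v w ∂ν) =
      ENNReal.ofReal ((σ * Real.sqrt (π / 2)) ^ d) * ∫⁻ u, ∫⁻ v, Fk d σ u v ∂ν ∂μ := by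
  rw [L_swap' (Fk d (σ / Real.sqrt 2)) (Fk_meas d _) μ ν]
  have h : ∀ u, (∫⁻ v, ∫⁻ w : Fin d → ℝ,
      Fk d (σ / Real.sqrt 2) u w * Fk d (σ / Real.sqrt 2) v w ∂volume ∂ν) =
      ENNReal.ofReal ((σ * Real.sqrt (π / 2)) ^ d) * ∫⁻ v, Fk d σ u v ∂ν := by
    intro u
    rw [← lintegral_const_mul'' _ (f := fun v => Fk d σ u v)
      (((Fk_meas d σ).comp (measurable_const.prodMk measurable_id)).aemeasurable)]
    exact lintegral_congr fun v => inner_val σ hσ u v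
  simp_rw [h]
  rw [← lintegral_const_mul'' _ (f := fun u => ∫⁻ v, Fk d σ u v ∂ν) (by
    apply Measurable.aemeasurable
    exact Measurable.lintegral_prod_right (f := fun u v => Fk d σ u v) (Fk_meas d σ))]

lemma RHS_eq (σ : ℝ) (μ ν : Measure (Fin d → ℝ)) [IsFiniteMeasure μ] [IsFiniteMeasure ν] :
    (∫ u, ∫ v, gaussKer d σ u v ∂ν ∂μ) = (∫⁻ u, ∫⁻ v, Fk d σ u v ∂ν ∂μ).toReal := by
  rw [integral_eq_lintegral_of_nonneg_ae
    (ae_of_all _ fun u => integral_nonneg fun v => gaussKer_nonneg _ _ _ _)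
    (MeasureTheory.StronglyMeasurable.integral_prod_right
      (f := fun u v : Fin d → ℝ => gaussKer d σ u v)
      (gaussKer_cont d σ).stronglyMeasurable).aestronglyMeasurable]
  congr 1
  refine lintegral_congr fun u => ?_
  rw [ofReal_integral_eq_lintegral_ofReal (int_g' σ ν u)
    (ae_of_all _ fun v => gaussKer_nonneg _ _ _ _)]
  exact lintegral_congr fun v => (Fk_apply d σ u v).symm

lemma core (σ : ℝ) (hσ : 0 < σ) (μ ν : Measure (Fin d → ℝ))
    [IsFiniteMeasure μ] [IsFiniteMeasure ν] :
    Integrable (fun w : Fin d → ℝ =>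
        (∫ u, gaussKer d (σ / Real.sqrt 2) u w ∂μ) *
          (∫ v, gaussKer d (σ / Real.sqrt 2) v w ∂ν)) ∧
      (∫ w : Fin d → ℝ,
          (∫ u, gaussKer d (σ / Real.sqrt 2) u w ∂μ) *
            (∫ v, gaussKer d (σ / Real.sqrt 2) v w ∂ν)) =
        (σ * Real.sqrt (π / 2)) ^ d * ∫ u, ∫ v, gaussKer d σ u v ∂ν ∂μ := by
  have hnn : ∀ w : Fin d → ℝ, 0 ≤ (∫ u, gaussKer d (σ / Real.sqrt 2) u w ∂μ) *
      (∫ v, gaussKer d (σ / Real.sqrt 2) v w ∂ν) := fun w =>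
    mul_nonneg (integral_nonneg fun u => gaussKer_nonneg _ _ _ _)
      (integral_nonneg fun v => gaussKer_nonneg _ _ _ _)
  have hsm : AEStronglyMeasurable (fun w : Fin d → ℝ =>
      (∫ u, gaussKer d (σ / Real.sqrt 2) u w ∂μ) *
        (∫ v, gaussKer d (σ / Real.sqrt 2) v w ∂ν)) volume :=
    ((meas_A _ μ).mul (meas_A _ ν)).aestronglyMeasurable
  have hLint : (∫⁻ w : Fin d → ℝ, ENNReal.ofReal
      ((∫ u, gaussKer d (σ / Real.sqrt 2) u w ∂μ) *
        (∫ v, gaussKer d (σ / Real.sqrt 2) v w ∂ν))) =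
      ∫⁻ w : Fin d → ℝ, (∫⁻ u, Fk d (σ / Real.sqrt 2) u w ∂μ) *
        (∫⁻ v, Fk d (σ / Real.sqrt 2) v w ∂ν) := by
    refine lintegral_congr fun w => ?_
    rw [ENNReal.ofReal_mul (integral_nonneg fun u => gaussKer_nonneg _ _ _ _),
      ofReal_A, ofReal_A]
  have hfin : (∫⁻ w : Fin d → ℝ, (∫⁻ u, Fk d (σ / Real.sqrt 2) u w ∂μ) *
      (∫⁻ v, Fk d (σ / Real.sqrt 2) v w ∂ν)) ≠ ⊤ := by
    rw [L_val σ hσ μ ν]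
    exact (ENNReal.mul_lt_top ENNReal.ofReal_lt_top (M_fin σ μ ν).lt_top).ne
  constructor
  · refine ⟨hsm, ?_⟩
    rw [hasFiniteIntegral_iff_ofReal (ae_of_all _ hnn), hLint]
    exact hfin.lt_top
  · rw [integral_eq_lintegral_of_nonneg_ae (ae_of_all _ hnn) hsm, hLint, L_val σ hσ μ ν,
      ENNReal.toReal_mul, ENNReal.toReal_ofReal (by positivity), RHS_eq σ μ ν]

lemma int_B (σ : ℝ) (μ ν : Measure (Fin d → ℝ)) [IsFiniteMeasure μ] [IsFiniteMeasure ν] :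
    Integrable (fun u => ∫ v, gaussKer d σ u v ∂ν) μ := by
  refine (integrable_const (ν Set.univ).toReal).mono'
    (MeasureTheory.StronglyMeasurable.integral_prod_right
      (f := fun u v : Fin d → ℝ => gaussKer d σ u v)
      (gaussKer_cont d σ).stronglyMeasurable).aestronglyMeasurable
    (ae_of_all _ fun u => ?_)
  rw [Real.norm_eq_abs, abs_of_nonneg (integral_nonneg fun v => gaussKer_nonneg _ _ _ _)]
  calc (∫ v, gaussKer d σ u v ∂ν) ≤ ∫ _v, (1:ℝ) ∂ν :=
        integral_mono (int_g' σ ν u) (integrable_const 1) fun v => gaussKer_le_one _ _ _ _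
    _ = (ν Set.univ).toReal := by simp [measureReal_def]

end core

lemma const_cancel (d : ℕ) (σ : ℝ) (hσ : 0 < σ) :
    (1 / σ) ^ d * (2 / Real.pi) ^ ((d : ℝ) / 2) * (σ * Real.sqrt (π / 2)) ^ d = 1 := by
  have hπ : (0:ℝ) < π := Real.pi_pos
  rw [mul_pow, Real.sqrt_eq_rpow, ← Real.rpow_natCast ((π/2) ^ ((1:ℝ)/2)) d,
    ← Real.rpow_natCast ((1:ℝ)/σ) d, ← Real.rpow_natCast σ d, ← Real.rpow_mul (by positivity)]
  have h1 : ((1:ℝ)/σ) ^ (d:ℝ) * σ ^ (d:ℝ) = 1 := by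
    rw [← Real.mul_rpow (by positivity) hσ.le, one_div, inv_mul_cancel₀ hσ.ne',
      Real.one_rpow]
  have h2 : ((2:ℝ)/π) ^ ((d:ℝ)/2) * (π/2) ^ ((1:ℝ)/2 * d) = 1 := by
    rw [show (1:ℝ)/2 * d = (d:ℝ)/2 by ring,
      ← Real.mul_rpow (by positivity) (by positivity),
      div_mul_div_comm, mul_comm (2:ℝ) π, div_self (by positivity), Real.one_rpow]
  calc (1/σ) ^ (d:ℝ) * (2/π) ^ ((d:ℝ)/2) * (σ ^ (d:ℝ) * ((π/2) ^ ((1:ℝ)/2 * d))) =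
      ((1/σ) ^ (d:ℝ) * σ ^ (d:ℝ)) * ((2/π) ^ ((d:ℝ)/2) * (π/2) ^ ((1:ℝ)/2 * d)) := by ring
    _ = 1 := by rw [h1, h2, mul_one]

theorem stmt_16 (d : ℕ) (σ : ℝ) (hσ : 0 < σ)
    (D₁ D₂ : SignedMeasure (Fin d → ℝ))
    (hD₁ : ∀ A : Set (Fin d → ℝ), MeasurableSet A → A ∩ unitCube d = ∅ → D₁ A = 0)
    (hD₂ : ∀ A : Set (Fin d → ℝ), MeasurableSet A → A ∩ unitCube d = ∅ → D₂ A = 0) :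
    (1 / σ) ^ d * (2 / Real.pi) ^ ((d : ℝ) / 2) *
        ∫ w : Fin d → ℝ,
          signedIntegral D₁ (fun u => gaussKer d (σ / Real.sqrt 2) u w) *
            signedIntegral D₂ (fun u => gaussKer d (σ / Real.sqrt 2) u w) =
      signedIntegral D₁ fun u => signedIntegral D₂ fun v => gaussKer d σ u v := by
  set P₁ := D₁.toJordanDecomposition.posPart with hP₁
  set N₁ := D₁.toJordanDecomposition.negPart with hN₁
  set P₂ := D₂.toJordanDecomposition.posPart with hP₂
  set N₂ := D₂.toJordanDecomposition.negPart with hN₂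
  obtain ⟨i11, e11⟩ := core σ hσ P₁ P₂
  obtain ⟨i12, e12⟩ := core σ hσ P₁ N₂
  obtain ⟨i21, e21⟩ := core σ hσ N₁ P₂
  obtain ⟨i22, e22⟩ := core σ hσ N₁ N₂
  simp only [signedIntegral, ← hP₁, ← hN₁, ← hP₂, ← hN₂]
  have hfun : (fun w : Fin d → ℝ =>
      ((∫ u, gaussKer d (σ / Real.sqrt 2) u w ∂P₁) -
        ∫ u, gaussKer d (σ / Real.sqrt 2) u w ∂N₁) *
      ((∫ u, gaussKer d (σ / Real.sqrt 2) u w ∂P₂) -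
        ∫ u, gaussKer d (σ / Real.sqrt 2) u w ∂N₂)) = fun w =>
      ((∫ u, gaussKer d (σ / Real.sqrt 2) u w ∂P₁) *
          (∫ v, gaussKer d (σ / Real.sqrt 2) v w ∂P₂) -
        (∫ u, gaussKer d (σ / Real.sqrt 2) u w ∂P₁) *
          (∫ v, gaussKer d (σ / Real.sqrt 2) v w ∂N₂)) -
      ((∫ u, gaussKer d (σ / Real.sqrt 2) u w ∂N₁) *
          (∫ v, gaussKer d (σ / Real.sqrt 2) v w ∂P₂) -
        (∫ u, gaussKer d (σ / Real.sqrt 2) u w ∂N₁) *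
          (∫ v, gaussKer d (σ / Real.sqrt 2) v w ∂N₂)) := by
    funext w; ring
  have E1 : (∫ w : Fin d → ℝ,
      (((∫ u, gaussKer d (σ / Real.sqrt 2) u w ∂P₁) *
          (∫ v, gaussKer d (σ / Real.sqrt 2) v w ∂P₂) -
        (∫ u, gaussKer d (σ / Real.sqrt 2) u w ∂P₁) *
          (∫ v, gaussKer d (σ / Real.sqrt 2) v w ∂N₂)) -
      ((∫ u, gaussKer d (σ / Real.sqrt 2) u w ∂N₁) *
          (∫ v, gaussKer d (σ / Real.sqrt 2) v w ∂P₂) -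
        (∫ u, gaussKer d (σ / Real.sqrt 2) u w ∂N₁) *
          (∫ v, gaussKer d (σ / Real.sqrt 2) v w ∂N₂)))) =
      ((∫ w : Fin d → ℝ, (∫ u, gaussKer d (σ / Real.sqrt 2) u w ∂P₁) *
          (∫ v, gaussKer d (σ / Real.sqrt 2) v w ∂P₂)) -
        ∫ w : Fin d → ℝ, (∫ u, gaussKer d (σ / Real.sqrt 2) u w ∂P₁) *
          (∫ v, gaussKer d (σ / Real.sqrt 2) v w ∂N₂)) -
      ((∫ w : Fin d → ℝ, (∫ u, gaussKer d (σ / Real.sqrt 2) u w ∂N₁) *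
          (∫ v, gaussKer d (σ / Real.sqrt 2) v w ∂P₂)) -
        ∫ w : Fin d → ℝ, (∫ u, gaussKer d (σ / Real.sqrt 2) u w ∂N₁) *
          (∫ v, gaussKer d (σ / Real.sqrt 2) v w ∂N₂)) := by
    have iA : Integrable (fun w : Fin d → ℝ =>
        (∫ u, gaussKer d (σ / Real.sqrt 2) u w ∂P₁) *
          (∫ v, gaussKer d (σ / Real.sqrt 2) v w ∂P₂) -
        (∫ u, gaussKer d (σ / Real.sqrt 2) u w ∂P₁) *
          (∫ v, gaussKer d (σ / Real.sqrt 2) v w ∂N₂)) volume := i11.sub i12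
    have iB : Integrable (fun w : Fin d → ℝ =>
        (∫ u, gaussKer d (σ / Real.sqrt 2) u w ∂N₁) *
          (∫ v, gaussKer d (σ / Real.sqrt 2) v w ∂P₂) -
        (∫ u, gaussKer d (σ / Real.sqrt 2) u w ∂N₁) *
          (∫ v, gaussKer d (σ / Real.sqrt 2) v w ∂N₂)) volume := i21.sub i22
    rw [integral_sub iA iB, integral_sub i11 i12, integral_sub i21 i22]
  have E2 : (∫ u, ((∫ v, gaussKer d σ u v ∂P₂) - ∫ v, gaussKer d σ u v ∂N₂) ∂P₁) =
      (∫ u, ∫ v, gaussKer d σ u v ∂P₂ ∂P₁) - ∫ u, ∫ v, gaussKer d σ u v ∂N₂ ∂P₁ :=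
    integral_sub (int_B σ P₁ P₂) (int_B σ P₁ N₂)
  have E3 : (∫ u, ((∫ v, gaussKer d σ u v ∂P₂) - ∫ v, gaussKer d σ u v ∂N₂) ∂N₁) =
      (∫ u, ∫ v, gaussKer d σ u v ∂P₂ ∂N₁) - ∫ u, ∫ v, gaussKer d σ u v ∂N₂ ∂N₁ :=
    integral_sub (int_B σ N₁ P₂) (int_B σ N₁ N₂)
  rw [hfun, E1, E2, E3, e11, e12, e21, e22]
  have hc := const_cancel d σ hσ
  set c := (1 / σ) ^ d * (2 / Real.pi) ^ ((d : ℝ) / 2)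
  set C := (σ * Real.sqrt (π / 2)) ^ d
  linear_combination ((∫ u, ∫ v, gaussKer d σ u v ∂P₂ ∂P₁) - (∫ u, ∫ v, gaussKer d σ u v ∂N₂ ∂P₁)
    - (∫ u, ∫ v, gaussKer d σ u v ∂P₂ ∂N₁) + (∫ u, ∫ v, gaussKer d σ u v ∂N₂ ∂N₁)) * hc
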